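/- Let μ > 1 and let z = (z₁, z₂) ∈ Ω̃. Then φ̃(z) ∈ D_μ, i.e., 0 < |φ̃₁(z)| < 1 and |log |φ̃₂(z)|²| < arccos(|φ̃₁(z)|^μ). -/

import Mathlib

open MeasureTheory

/-- `log^t(z)`: the branch of the logarithm of `z` whose imaginary part lies in
`[log t², log t² + 2π)`. -/
noncomputable def logT (t : ℝ) (z : ℂ) : ℂ :=
  Complex.log z +
    ((2 * Real.pi * (⌈(Real.log (t ^ 2) - (Complex.log z).im) / (2 * Real.pi)⌉ : ℤ) : ℝ) : ℂ) *
      Complex.I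

/-- `ρ̃(z) = |z₁ + e^{i log|z₂|²}|² - 1`. -/
noncomputable def rhoT (z : ℂ × ℂ) : ℝ :=
  ‖z.1 + Complex.exp (Complex.I * (Real.log (‖z.2‖ ^ 2) : ℂ))‖ ^ 2 - 1

/-- `Ω̃ = {z ∈ ℂ × (ℂ∖{0}) : ρ̃(z) < 0}`. -/
def OmegaT : Set (ℂ × ℂ) := {z | z.2 ≠ 0 ∧ rhoT z < 0}

/-- `φ̃(z) = (exp((log^{|z₂|}(z₁) - log 2)/μ), z₂ exp(½(π + i log^{|z₂|}(z₁))))`. -/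
noncomputable def phiT (μ : ℝ) (z : ℂ × ℂ) : ℂ × ℂ :=
  (Complex.exp ((logT ‖z.2‖ z.1 - (Real.log 2 : ℂ)) / (μ : ℂ)),
   z.2 * Complex.exp (((Real.pi : ℂ) + Complex.I * logT ‖z.2‖ z.1) / 2))

/-- The Reinhardt domain
`D_μ = {w ∈ ℂ² : 0 < |w₁| < 1 and |log |w₂|²| < arccos(|w₁|^μ)}`. -/
def Dset (μ : ℝ) : Set (ℂ × ℂ) :=
  {w | 0 < ‖w.1‖ ∧ ‖w.1‖ < 1 ∧
    |Real.log (‖w.2‖ ^ 2)| < Real.arccos (‖w.1‖ ^ μ)}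

lemma exp_logT (t : ℝ) {z : ℂ} (hz : z ≠ 0) : Complex.exp (logT t z) = z := by
  rw [logT, Complex.exp_add, Complex.exp_log hz]
  have h := Complex.exp_int_mul_two_pi_mul_I (⌈(Real.log (t ^ 2) - (Complex.log z).im) / (2 * Real.pi)⌉)
  rw [show (((2 * Real.pi * (⌈(Real.log (t ^ 2) - (Complex.log z).im) / (2 * Real.pi)⌉ : ℤ) : ℝ) : ℂ) * Complex.I)
      = ((⌈(Real.log (t ^ 2) - (Complex.log z).im) / (2 * Real.pi)⌉ : ℤ) : ℂ) * (2 * Real.pi * Complex.I) by push_cast; ring,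
    h, mul_one]

lemma logT_re (t : ℝ) (z : ℂ) : (logT t z).re = Real.log (‖z‖) := by
  simp [logT, Complex.log_re]

lemma logT_im (t : ℝ) (z : ℂ) :
    (logT t z).im = (Complex.log z).im +
      2 * Real.pi * ⌈(Real.log (t ^ 2) - (Complex.log z).im) / (2 * Real.pi)⌉ := by
  simp [logT]

lemma logT_im_lb (t : ℝ) (z : ℂ) : Real.log (t ^ 2) ≤ (logT t z).im := by
  have hπ : (0:ℝ) < 2 * Real.pi := by positivity
  rw [logT_im]
  have h := Int.le_ceil ((Real.log (t ^ 2) - (Complex.log z).im) / (2 * Real.pi))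
  rw [div_le_iff₀ hπ] at h
  linarith

lemma logT_im_ub (t : ℝ) (z : ℂ) : (logT t z).im < Real.log (t ^ 2) + 2 * Real.pi := by
  have hπ : (0:ℝ) < 2 * Real.pi := by positivity
  rw [logT_im]
  have h := Int.ceil_lt_add_one ((Real.log (t ^ 2) - (Complex.log z).im) / (2 * Real.pi))
  rw [show (Real.log (t ^ 2) - (Complex.log z).im) / (2 * Real.pi) + 1
      = (Real.log (t ^ 2) - (Complex.log z).im + 2 * Real.pi) / (2 * Real.pi) by field_simp,
    lt_div_iff₀ hπ] at h
  linarith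

theorem phiT_mem_Dset (μ : ℝ) (hμ : 1 < μ) (z : ℂ × ℂ) (hz : z ∈ OmegaT) :
    phiT μ z ∈ Dset μ := by
  obtain ⟨hz2, hρ⟩ := hz
  have hμ0 : (0:ℝ) < μ := by linarith
  set L : ℝ := Real.log (‖z.2‖ ^ 2) with hL
  -- z.1 ≠ 0
  have hz1 : z.1 ≠ 0 := by
    intro h
    rw [rhoT, h, zero_add] at hρ
    rw [Complex.norm_exp] at hρ
    simp at hρ
  set w : ℂ := logT (‖z.2‖) z.1 with hw
  have hexp : Complex.exp w = z.1 := exp_logT _ hz1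
  set r : ℝ := ‖z.1‖ with hr
  have hr0 : 0 < r := norm_pos_iff.mpr hz1
  have hre : w.re = Real.log r := logT_re _ _
  set θ : ℝ := w.im - L with hθ
  have hθ0 : 0 ≤ θ := by have := logT_im_lb (‖z.2‖) z.1; simp only [hθ, hL]; linarith
  have hθ2 : θ < 2 * Real.pi := by
    have := logT_im_ub (‖z.2‖) z.1; simp only [hθ, hL]; linarith
  -- z.1 = r * exp(i im w)
  have hz1eq : z.1 = (r:ℂ) * Complex.exp ((w.im : ℝ) * Complex.I) := by
    rw [← hexp]
    conv_lhs => rw [← Complex.re_add_im w]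
    rw [Complex.exp_add]
    congr 1
    rw [← Complex.ofReal_exp, hre, Real.exp_log hr0]
  -- factor out exp(I L)
  have hfac : z.1 + Complex.exp (Complex.I * (L:ℂ))
      = Complex.exp (Complex.I * (L:ℂ)) * ((r:ℂ) * Complex.exp ((θ:ℝ) * Complex.I) + 1) := by
    have h2 : Complex.exp ((θ:ℝ) * Complex.I) * Complex.exp (Complex.I * (L:ℂ))
        = Complex.exp ((w.im:ℝ) * Complex.I) := by
      rw [← Complex.exp_add]
      congr 1
      push_cast [hθ]
      ring
    rw [mul_add, mul_one, hz1eq, ← h2]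
    ring
  -- the key inequality from ρ < 0
  have hcos : r + 2 * Real.cos θ < 0 := by
    have h1 : ‖z.1 + Complex.exp (Complex.I * (L:ℂ))‖ ^ 2
        = r ^ 2 + 2 * r * Real.cos θ + 1 := by
      rw [hfac, norm_mul, mul_pow, Complex.norm_exp]
      have : (Complex.I * (L:ℂ)).re = 0 := by simp
      rw [this, Real.exp_zero, one_pow, one_mul, Complex.sq_norm, Complex.normSq_apply]
      simp only [Complex.add_re, Complex.add_im, Complex.mul_re, Complex.mul_im,
        Complex.ofReal_re, Complex.ofReal_im, Complex.one_re, Complex.one_im,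
        Complex.exp_ofReal_mul_I_re, Complex.exp_ofReal_mul_I_im]
      nlinarith [Real.sin_sq_add_cos_sq θ]
    rw [rhoT] at hρ
    rw [← hL, h1] at hρ
    nlinarith
  have hcosθ : Real.cos θ < -(r / 2) := by nlinarith
  have hr2 : r / 2 < 1 := by nlinarith [Real.neg_one_le_cos θ]
  set c : ℝ := r / 2 with hc
  have hc0 : 0 < c := by positivity
  set α : ℝ := Real.arccos c with hα
  have hcα : Real.cos α = c := Real.cos_arccos (by linarith) (by linarith)
  have hα0 : 0 < α := Real.arccos_pos.2 hr2
  have hαπ : α < Real.pi / 2 := by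
    exact Real.arccos_lt_pi_div_two.2 hc0
  -- |φ₁| and |φ₂|
  have habs1 : ‖(phiT μ z).1‖ = Real.exp ((Real.log r - Real.log 2) / μ) := by
    rw [phiT, Complex.norm_exp]
    congr 1
    rw [Complex.div_ofReal_re, Complex.sub_re, Complex.ofReal_re, ← hw, hre]
  have habs2 : ‖(phiT μ z).2‖ = ‖z.2‖ * Real.exp ((Real.pi - w.im) / 2) := by
    rw [phiT, norm_mul, Complex.norm_exp]
    congr 2
    rw [show ((Real.pi : ℂ) + Complex.I * w) / 2 = ((Real.pi : ℂ) + Complex.I * w) / ((2:ℝ):ℂ) by norm_num,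
      Complex.div_ofReal_re]
    simp [Complex.add_re, Complex.mul_re]
    ring
  refine ⟨by rw [habs1]; positivity, ?_, ?_⟩
  · rw [habs1, Real.exp_lt_one_iff]
    have : Real.log r < Real.log 2 := by
      rw [Real.log_lt_log_iff hr0 (by norm_num)]; linarith
    exact div_neg_of_neg_of_pos (by linarith) hμ0
  · -- |log|φ₂|²| < arccos(|φ₁|^μ)
    have hpow : ‖(phiT μ z).1‖ ^ μ = c := by
      rw [habs1, Real.rpow_def_of_pos (Real.exp_pos _), Real.log_exp,
        div_mul_cancel₀ _ (ne_of_gt hμ0), Real.exp_sub, Real.exp_log hr0,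
        Real.exp_log (by norm_num : (0:ℝ) < 2)]
    have hL2 : L = 2 * Real.log (‖z.2‖) := by
      rw [hL, Real.log_pow]; push_cast; ring
    have hlog2 : Real.log (‖(phiT μ z).2‖ ^ 2) = Real.pi - θ := by
      rw [habs2, Real.log_pow, Real.log_mul (norm_ne_zero_iff.mpr hz2) (Real.exp_ne_zero _), Real.log_exp]
      push_cast
      rw [hθ]
      linarith [hL2]
    rw [hlog2, hpow, ← hα, abs_lt]
    have hcpa : Real.cos (Real.pi - α) = -c := by rw [Real.cos_pi_sub, hcα]
    have key : ∀ x : ℝ, 0 ≤ x → Real.cos x < Real.cos (Real.pi - α) → Real.pi - α < x := by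
      intro x hx0 hcx
      by_contra h
      push_neg at h
      exact absurd (Real.cos_le_cos_of_nonneg_of_le_pi hx0 (by linarith [Real.pi_pos]) h)
        (not_le.2 hcx)
    rcases le_or_gt θ Real.pi with h | h
    · have h1 : Real.pi - α < θ := key θ hθ0 (by rw [hcpa]; exact hcosθ)
      constructor <;> linarith
    · have h1 : Real.pi - α < 2 * Real.pi - θ := by
        refine key _ (by linarith) ?_
        rw [Real.cos_two_pi_sub, hcpa]
        exact hcosθ
      constructor <;> linarith
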